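/- Let T be the indicator vector of three distinct edges of a simple graph G such that the three edges do not form a K₃ and no vertex lies in all three edges. Then, with L the Laplacian of the line graph and d its degree vector, Tᵀ L T − dᵀ T > −6 (in fact ≥ −4). -/
import Mathlib


/-- The degree of edge `e` in the line graph of `G`: the number of other edges of `G`
sharing a vertex with `e`. -/
def lineDeg {V : Type*} [Fintype V] [DecidableEq V] (G : SimpleGraph V)
    [DecidableRel G.Adj] (e : Sym2 V) : ℕ :=
  (G.edgeFinset.filter (fun f => f ≠ e ∧ ∃ v, v ∈ e ∧ v ∈ f)).card

/-- The Laplacian of the line graph of `G`, as a function on pairs of edges: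
`L e e` is the line-graph degree of `e`; `L e f = -1` if distinct edges `e, f` share a
vertex, and `0` otherwise. -/
def lineLap {V : Type*} [Fintype V] [DecidableEq V] (G : SimpleGraph V)
    [DecidableRel G.Adj] (e f : Sym2 V) : ℤ :=
  if e = f then (lineDeg G e : ℤ) else if ∃ v, v ∈ e ∧ v ∈ f then -1 else 0

/-- Three edges form a subgraph isomorphic to `K₃`. -/
def FormsK3 {V : Type*} [DecidableEq V] (e₁ e₂ e₃ : Sym2 V) : Prop :=
  ∃ a b c : V, a ≠ b ∧ a ≠ c ∧ b ≠ c ∧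
    ({e₁, e₂, e₃} : Finset (Sym2 V)) = {s(a, b), s(a, c), s(b, c)}

lemma lineLap_comm {V : Type*} [Fintype V] [DecidableEq V] (G : SimpleGraph V)
    [DecidableRel G.Adj] (e f : Sym2 V) : lineLap G e f = lineLap G f e := by
  unfold lineLap
  by_cases h : e = f
  · subst h; rfl
  · simp only [if_neg h, if_neg (Ne.symm h)]
    congr 1
    simp [and_comm]

lemma key1 {V : Type*} [DecidableEq V] (a b : V) (j₂ j₃ : Sym2 V)
    (hab : a ≠ b) (hd2 : ¬ j₂.IsDiag) (hd3 : ¬ j₃.IsDiag)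
    (h12 : s(a, b) ≠ j₂)
    (ha2 : a ∈ j₂)
    (B : ∃ v, v ∈ s(a, b) ∧ v ∈ j₃) (C : ∃ v, v ∈ j₂ ∧ v ∈ j₃)
    (hcom : ¬ ∃ v, v ∈ s(a, b) ∧ v ∈ j₂ ∧ v ∈ j₃) :
    FormsK3 s(a, b) j₂ j₃ := by
  obtain ⟨v, hv1, hv3⟩ := B
  rw [Sym2.mem_iff] at hv1
  rcases hv1 with rfl | rfl
  · exact absurd ⟨v, Sym2.mem_mk_left _ _, ha2, hv3⟩ hcom
  · -- v = b ∈ j₃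
    have hc : s(a, Sym2.Mem.other ha2) = j₂ := Sym2.other_spec ha2
    have hd : s(v, Sym2.Mem.other hv3) = j₃ := Sym2.other_spec hv3
    set c := Sym2.Mem.other ha2 with hcdef
    set d := Sym2.Mem.other hv3 with hddef
    have hca : c ≠ a := Sym2.other_ne hd2 ha2
    have hdb : d ≠ v := Sym2.other_ne hd3 hv3
    obtain ⟨w, hw2, hw3⟩ := C
    rw [← hc, Sym2.mem_iff] at hw2
    rw [← hd, Sym2.mem_iff] at hw3
    rcases hw2 with rfl | rfl
    · rcases hw3 with h | h
      · exact absurd h hab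
      · -- a = d, so a ∈ j₃
        exact absurd ⟨w, Sym2.mem_mk_left _ _, ha2, by rw [← hd, h]; exact Sym2.mem_mk_right _ _⟩ hcom
    · rcases hw3 with h | h
      · -- c = b, so j₂ = s(a,b)
        exact absurd (by rw [← hc, h]) h12
      · -- c = d : triangle a b c
        refine ⟨a, v, c, hab, Ne.symm hca, fun hvc => hdb (by rw [← h, ← hvc]), ?_⟩
        rw [← hc, ← hd, ← h]

lemma key {V : Type*} [DecidableEq V] (j₁ j₂ j₃ : Sym2 V)
    (hd1 : ¬ j₁.IsDiag) (hd2 : ¬ j₂.IsDiag) (hd3 : ¬ j₃.IsDiag)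
    (h12 : j₁ ≠ j₂)
    (A : ∃ v, v ∈ j₁ ∧ v ∈ j₂) (B : ∃ v, v ∈ j₁ ∧ v ∈ j₃) (C : ∃ v, v ∈ j₂ ∧ v ∈ j₃)
    (hcom : ¬ ∃ v, v ∈ j₁ ∧ v ∈ j₂ ∧ v ∈ j₃) :
    FormsK3 j₁ j₂ j₃ := by
  induction j₁ using Sym2.ind with
  | _ a b =>
    have hab : a ≠ b := by
      intro h; exact hd1 (by rw [h]; exact Sym2.mk_isDiag_iff.mpr rfl)
    obtain ⟨v, hv1, hv2⟩ := A
    rw [Sym2.mem_iff] at hv1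
    rcases hv1 with rfl | rfl
    · exact key1 v b j₂ j₃ hab hd2 hd3 h12 hv2 B C hcom
    · rw [Sym2.eq_swap] at h12 B hcom ⊢
      exact key1 v a j₂ j₃ hab.symm hd2 hd3 h12 hv2 B C hcom

/-- For the indicator vector `T` of three distinct edges of `G` that do not form a `K₃`
and have no common vertex, `Tᵀ L T − dᵀ T > −6` (in fact `≥ −4`). -/
theorem quadForm_indicator_gt_neg_six {V : Type*} [Fintype V] [DecidableEq V]
    (G : SimpleGraph V) [DecidableRel G.Adj] (j₁ j₂ j₃ : Sym2 V)
    (hj₁ : j₁ ∈ G.edgeFinset) (hj₂ : j₂ ∈ G.edgeFinset) (hj₃ : j₃ ∈ G.edgeFinset)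
    (h₁₂ : j₁ ≠ j₂) (h₁₃ : j₁ ≠ j₃) (h₂₃ : j₂ ≠ j₃)
    (hK : ¬ FormsK3 j₁ j₂ j₃)
    (hcom : ¬ ∃ v : V, v ∈ j₁ ∧ v ∈ j₂ ∧ v ∈ j₃)
    (T : Sym2 V → ℤ)
    (hT : ∀ e, T e = if e = j₁ ∨ e = j₂ ∨ e = j₃ then 1 else 0) :
    -6 < (∑ e ∈ G.edgeFinset, ∑ f ∈ G.edgeFinset, T e * lineLap G e f * T f) -
          ∑ e ∈ G.edgeFinset, (lineDeg G e : ℤ) * T e ∧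
      -4 ≤ (∑ e ∈ G.edgeFinset, ∑ f ∈ G.edgeFinset, T e * lineLap G e f * T f) -
          ∑ e ∈ G.edgeFinset, (lineDeg G e : ℤ) * T e := by
  classical
  have hdiag : ∀ e ∈ G.edgeFinset, ¬ e.IsDiag := by
    intro e he
    exact SimpleGraph.not_isDiag_of_mem_edgeSet G (SimpleGraph.mem_edgeFinset.mp he)
  -- general indicator summation lemma
  have sum3 : ∀ g : Sym2 V → ℤ,
      ∑ e ∈ G.edgeFinset, g e * T e = g j₁ + g j₂ + g j₃ := by
    intro g
    have step : ∀ e ∈ G.edgeFinset, g e * T e =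
        (if e = j₁ then g e else 0) + (if e = j₂ then g e else 0) +
          (if e = j₃ then g e else 0) := by
      intro e _
      rw [hT]
      by_cases e1 : e = j₁ <;> by_cases e2 : e = j₂ <;> by_cases e3 : e = j₃ <;>
        simp_all <;> ring
    rw [Finset.sum_congr rfl step, Finset.sum_add_distrib, Finset.sum_add_distrib,
      Finset.sum_ite_eq' G.edgeFinset j₁ g, Finset.sum_ite_eq' G.edgeFinset j₂ g,
      Finset.sum_ite_eq' G.edgeFinset j₃ g, if_pos hj₁, if_pos hj₂, if_pos hj₃]
  have hdeg : ∑ e ∈ G.edgeFinset, (lineDeg G e : ℤ) * T e =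
      (lineDeg G j₁ : ℤ) + lineDeg G j₂ + lineDeg G j₃ := sum3 _
  have hk : ∀ j : Sym2 V, ∑ e ∈ G.edgeFinset, T e * lineLap G e j =
      lineLap G j₁ j + lineLap G j₂ j + lineLap G j₃ j := by
    intro j
    rw [← sum3 (fun e => lineLap G e j)]
    exact Finset.sum_congr rfl fun e _ => mul_comm _ _
  have houter : ∑ e ∈ G.edgeFinset, ∑ f ∈ G.edgeFinset, T e * lineLap G e f * T f =
      (lineLap G j₁ j₁ + lineLap G j₂ j₁ + lineLap G j₃ j₁) +
      (lineLap G j₁ j₂ + lineLap G j₂ j₂ + lineLap G j₃ j₂) +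
      (lineLap G j₁ j₃ + lineLap G j₂ j₃ + lineLap G j₃ j₃) := by
    have inner : ∀ e ∈ G.edgeFinset, ∑ f ∈ G.edgeFinset, T e * lineLap G e f * T f =
        T e * lineLap G e j₁ + T e * lineLap G e j₂ + T e * lineLap G e j₃ :=
      fun e _ => sum3 (fun f => T e * lineLap G e f)
    rw [Finset.sum_congr rfl inner, Finset.sum_add_distrib, Finset.sum_add_distrib,
      hk j₁, hk j₂, hk j₃]
  have hdiagL : ∀ j : Sym2 V, lineLap G j j = (lineDeg G j : ℤ) := by
    intro j; simp [lineLap]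
  have main : (∑ e ∈ G.edgeFinset, ∑ f ∈ G.edgeFinset, T e * lineLap G e f * T f) -
      ∑ e ∈ G.edgeFinset, (lineDeg G e : ℤ) * T e =
      2 * lineLap G j₁ j₂ + 2 * lineLap G j₁ j₃ + 2 * lineLap G j₂ j₃ := by
    rw [houter, hdeg, hdiagL, hdiagL, hdiagL, lineLap_comm G j₂ j₁,
      lineLap_comm G j₃ j₁, lineLap_comm G j₃ j₂]
    ring
  rw [main]
  have hval : ∀ (e f : Sym2 V), e ≠ f →
      lineLap G e f = if ∃ v, v ∈ e ∧ v ∈ f then -1 else 0 := by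
    intro e f hef; simp [lineLap, hef]
  rw [hval _ _ h₁₂, hval _ _ h₁₃, hval _ _ h₂₃]
  by_cases c12 : ∃ v, v ∈ j₁ ∧ v ∈ j₂ <;>
  by_cases c13 : ∃ v, v ∈ j₁ ∧ v ∈ j₃ <;>
  by_cases c23 : ∃ v, v ∈ j₂ ∧ v ∈ j₃
  · exact absurd (key j₁ j₂ j₃ (hdiag _ hj₁) (hdiag _ hj₂) (hdiag _ hj₃) h₁₂
      c12 c13 c23 hcom) hK
  all_goals simp only [if_pos, if_neg, c12, c13, c23, if_true, if_false,
    ite_true, ite_false] <;> norm_num
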